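/- Meyers' Theorem 4: Let a < b and let f : ℝ → ℝ be differentiable at every point of the closed interval [a, b] with derivative f' continuous on [a, b]. If f'(a) * (f(b) - f(a) - (b - a) * f'(b)) > 0, then there exists ξ ∈ (a, b) such that f'(ξ) = (f(ξ) - f(a)) / (b - a). -/
import Mathlib


/-- Meyers' Theorem 4. -/
theorem meyers_theorem_4 (f f' : ℝ → ℝ) (a b : ℝ) (hab : a < b)
    (hf : ∀ x ∈ Set.Icc a b, HasDerivWithinAt f (f' x) (Set.Icc a b) x)
    (hf' : ContinuousOn f' (Set.Icc a b))
    (hcond : f' a * (f b - f a - (b - a) * f' b) > 0) :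
    ∃ ξ ∈ Set.Ioo a b, f' ξ = (f ξ - f a) / (b - a) := by
  set φ : ℝ → ℝ := fun x => f' x * (b - a) - (f x - f a) with hφ
  have hfc : ContinuousOn f (Set.Icc a b) := fun x hx =>
    (hf x hx).continuousWithinAt
  have hφc : ContinuousOn φ (Set.Icc a b) := by
    apply ContinuousOn.sub
    · exact hf'.mul continuousOn_const
    · exact hfc.sub continuousOn_const
  have hφa : φ a = f' a * (b - a) := by simp [hφ]
  have hφb : φ b = -(f b - f a - (b - a) * f' b) := by simp [hφ]; ring
  have hprod : φ a * φ b < 0 := by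
    rw [hφa, hφb]
    nlinarith [hab, hcond]
  have hzero : ∃ ξ ∈ Set.Ioo a b, φ ξ = 0 := by
    rcases lt_or_gt_of_ne (fun h : φ a = φ b => by rw [h] at hprod; nlinarith [sq_nonneg (φ b)]) with h | h
    · have := intermediate_value_Ioo hab.le hφc
      have h0 : (0 : ℝ) ∈ Set.Ioo (φ a) (φ b) := by
        constructor <;> nlinarith [hprod]
      obtain ⟨ξ, hξ, hξ0⟩ := this h0
      exact ⟨ξ, hξ, hξ0⟩
    · have := intermediate_value_Ioo' hab.le hφc
      have h0 : (0 : ℝ) ∈ Set.Ioo (φ b) (φ a) := by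
        constructor <;> nlinarith [hprod]
      obtain ⟨ξ, hξ, hξ0⟩ := this h0
      exact ⟨ξ, hξ, hξ0⟩
  obtain ⟨ξ, hξ, hξ0⟩ := hzero
  refine ⟨ξ, hξ, ?_⟩
  have h2 : f' ξ * (b - a) - (f ξ - f a) = 0 := hξ0
  have : f' ξ * (b - a) = f ξ - f a := by linarith
  rw [eq_div_iff (by linarith : b - a ≠ 0)]
  linarith [this]
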